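/- Let G be a graph obtained from a 2-edge-connected cubic multigraph H by replacing every vertex of H with a triangle (each of the three triangle vertices inheriting one of the three edges incident to the original vertex). If H has a 2-factor and a perfect matching whose edges are the edges not in the 2-factor, then G admits a (1,1,2,2)-packing coloring in which all vertices of G lying on edges corresponding to edges of the 2-factor of H receive colors from the two independent classes, and the vertices corresponding to vertices of H receive colors from the two 2-packing classes according to the perfect matching. -/

import Mathlib

/-- A loopless multigraph: a set of edges `E`, each with two distinct endpoints in `V`. -/
structure Multigraph (V : Type*) (E : Type*) where
  ends : E → Sym2 V
  loopless : ∀ e : E, ¬ (ends e).IsDiag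

namespace Multigraph

variable {V E : Type*}

/-- `u` and `v` are joined by a walk using only edges from `S`. -/
def Connects (M : Multigraph V E) (S : Set E) (u v : V) : Prop :=
  Relation.ReflTransGen (fun a b => ∃ e ∈ S, M.ends e = s(a, b)) u v

/-- The multigraph is connected using only the edges in `S`. -/
def ConnectedOn (M : Multigraph V E) (S : Set E) : Prop :=
  ∀ u v : V, M.Connects S u v

/-- The multigraph is connected. -/
def Connected (M : Multigraph V E) : Prop := M.ConnectedOn Set.univ

/-- An edge is a bridge if its deletion disconnects its endpoints. -/
def IsBridge (M : Multigraph V E) (e : E) : Prop :=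
  ∀ u v : V, M.ends e = s(u, v) → ¬ M.Connects {e' | e' ≠ e} u v

/-- The degree of a vertex: the number of edges incident with it. -/
noncomputable def degree (M : Multigraph V E) (v : V) : ℕ :=
  {e : E | v ∈ M.ends e}.ncard

/-- The multigraph is cubic: every vertex has degree `3`. -/
def IsCubic (M : Multigraph V E) : Prop := ∀ v : V, M.degree v = 3

/-- A `2`-factor: a set of edges in which every vertex lies on exactly two edges,
i.e. a spanning `2`-regular subgraph. -/
def IsTwoFactor (M : Multigraph V E) (F : Set E) : Prop :=
  ∀ v : V, {e : E | e ∈ F ∧ v ∈ M.ends e}.ncard = 2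

end Multigraph

/-- The flags (vertex–incident-edge pairs) of a multigraph: these are the vertices of the
graph obtained by replacing every vertex with a triangle. -/
def MGFlag {V E : Type*} (M : Multigraph V E) : Type _ :=
  {p : V × E // p.1 ∈ M.ends p.2}

/-- The graph obtained from a cubic multigraph `M` by replacing every vertex with a
triangle: the three flags at a vertex are pairwise adjacent (the triangle), each of them
inheriting one of the three edges formerly incident to the vertex, so that the two flags
of an edge of `M` are adjacent. -/
def triangleReplacement {V E : Type*} (M : Multigraph V E) : SimpleGraph (MGFlag M) :=
  SimpleGraph.fromRel (fun p q =>
    (p.1.1 = q.1.1 ∧ p.1.2 ≠ q.1.2) ∨ (p.1.2 = q.1.2 ∧ p.1.1 ≠ q.1.1))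

/-- A `(1,1,2,2)`-packing coloring: colors `0`,`1` are independent sets, colors `2`,`3`
are `2`-packings (pairwise distance greater than `2`). -/
def IsColoring1122 {W : Type*} (G : SimpleGraph W) (f : W → Fin 4) : Prop :=
  (∀ u v : W, f u = 0 → f v = 0 → ¬ G.Adj u v) ∧
  (∀ u v : W, f u = 1 → f v = 1 → ¬ G.Adj u v) ∧
  (∀ u v : W, u ≠ v → f u = 2 → f v = 2 → 2 < G.edist u v) ∧
  (∀ u v : W, u ≠ v → f u = 3 → f v = 3 → 2 < G.edist u v)

section Aux

open Classical in
private lemma tr_adj {V E : Type*} {M : Multigraph V E} {p q : MGFlag M} :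
    (triangleReplacement M).Adj p q ↔ p ≠ q ∧ (p.1.1 = q.1.1 ∨ p.1.2 = q.1.2) := by
  rw [triangleReplacement, SimpleGraph.fromRel_adj]
  constructor
  · rintro ⟨hne, (⟨h, -⟩ | ⟨h, -⟩) | (⟨h, -⟩ | ⟨h, -⟩)⟩
    · exact ⟨hne, Or.inl h⟩
    · exact ⟨hne, Or.inr h⟩
    · exact ⟨hne, Or.inl h.symm⟩
    · exact ⟨hne, Or.inr h.symm⟩
  · rintro ⟨hne, h⟩
    have h12 : p.1 ≠ q.1 := fun hh => hne (Subtype.ext hh)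
    refine ⟨hne, Or.inl ?_⟩
    rcases h with h | h
    · exact Or.inl ⟨h, fun h2 => h12 (Prod.ext h h2)⟩
    · exact Or.inr ⟨h, fun h2 => h12 (Prod.ext h2 h)⟩

private lemma ends_pair {V E : Type*} (M : Multigraph V E) (e : E) :
    ∃ ab : V × V, ab.1 ≠ ab.2 ∧ M.ends e = s(ab.1, ab.2) := by
  obtain ⟨⟨a, b⟩, h⟩ := Quot.exists_rep (M.ends e)
  refine ⟨(a, b), fun hab => M.loopless e ?_, h.symm⟩
  rw [← h]
  exact Sym2.mk_isDiag_iff.mpr hab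

end Aux
/-- Let `G` be obtained from a `2`-edge-connected cubic multigraph `H` by replacing every
vertex with a triangle. If `H` has a `2`-factor whose complementary edges form a perfect
matching, then `G` has a `(1,1,2,2)`-packing coloring in which the vertices lying on edges
of the `2`-factor get colors from the two independent classes, and the vertices lying on
matching edges get colors from the two `2`-packing classes, the two endpoints of each
matching edge receiving the two distinct packing colors. -/
theorem triangleReplacement_is_1122_colorable {V E : Type*} [Fintype V] [Fintype E]
    (M : Multigraph V E) (hconn : M.Connected) (hbridgeless : ∀ e : E, ¬ M.IsBridge e)
    (hcubic : M.IsCubic) (F : Set E) (hF : M.IsTwoFactor F)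
    (hmatching : ∀ v : V, {e : E | e ∉ F ∧ v ∈ M.ends e}.ncard = 1) :
    ∃ f : MGFlag M → Fin 4, IsColoring1122 (triangleReplacement M) f ∧
      (∀ p : MGFlag M, p.1.2 ∈ F → (f p = 0 ∨ f p = 1)) ∧
      (∀ p : MGFlag M, p.1.2 ∉ F → (f p = 2 ∨ f p = 3)) ∧
      (∀ p q : MGFlag M, p ≠ q → p.1.2 = q.1.2 → p.1.2 ∉ F → f p ≠ f q) := by
  classical
  -- endpoints of each edge
  choose ab hab hends using ends_pair M
  set ea : E → V := fun e => (ab e).1 with hea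
  set eb : E → V := fun e => (ab e).2 with heb
  have hmem_iff : ∀ (e : E) (v : V), v ∈ M.ends e ↔ v = ea e ∨ v = eb e := by
    intro e v; rw [hends e]; exact Sym2.mem_iff
  -- the finset of F-edges at a vertex
  set t : V → Finset E := fun v => Finset.univ.filter (fun e => e ∈ F ∧ v ∈ M.ends e) with ht
  have htv : ∀ v, (t v).card = 2 := by
    intro v
    have := hF v
    rw [Set.ncard_eq_toFinset_card'] at this
    rw [← this, ht]
    congr 1
    ext e
    simp
  have htmem : ∀ v e, e ∈ t v ↔ e ∈ F ∧ v ∈ M.ends e := by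
    intro v e; simp [ht]
  -- Hall's condition
  have hall : ∀ s : Finset V, s.card ≤ (s.biUnion t).card := by
    intro s
    have key : s.card * 2 ≤ (s.biUnion t).card * 2 := by
      apply Finset.card_mul_le_card_mul (fun v e => e ∈ t v)
      · intro v hv
        have hsub : t v ⊆ (s.biUnion t).bipartiteAbove (fun v e => e ∈ t v) v := by
          intro e he
          rw [Finset.mem_bipartiteAbove]
          exact ⟨Finset.mem_biUnion.mpr ⟨v, hv, he⟩, he⟩
        calc 2 = (t v).card := (htv v).symm
        _ ≤ _ := Finset.card_le_card hsub
      · intro e he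
        have hsub : s.bipartiteBelow (fun v e => e ∈ t v) e ⊆ {ea e, eb e} := by
          intro v hv
          rw [Finset.mem_bipartiteBelow] at hv
          have := (htmem v e).mp hv.2
          have := (hmem_iff e v).mp this.2
          simp only [Finset.mem_insert, Finset.mem_singleton]
          exact this
        calc (s.bipartiteBelow (fun v e => e ∈ t v) e).card ≤ ({ea e, eb e} : Finset V).card :=
              Finset.card_le_card hsub
        _ ≤ 2 := Finset.card_insert_le _ _ |>.trans (by simp)
    omega
  obtain ⟨σ, hσinj, hσmem⟩ := (Finset.all_card_le_biUnion_card_iff_existsInjective' t).mp hall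
  have hσF : ∀ v, σ v ∈ F := fun v => ((htmem v (σ v)).mp (hσmem v)).1
  have hσends : ∀ v, v ∈ M.ends (σ v) := fun v => ((htmem v (σ v)).mp (hσmem v)).2
  -- |F| = |V| by double counting
  have hcard : Fintype.card V * 2 = F.toFinset.card * 2 := by
    apply Finset.card_mul_eq_card_mul (fun v e => v ∈ M.ends e)
    · intro v _
      rw [← htv v]
      congr 1
      ext e
      rw [Finset.mem_bipartiteAbove, htmem]
      simp only [Set.mem_toFinset]
    · intro e he
      have : Finset.univ.bipartiteBelow (fun v e => v ∈ M.ends e) e = {ea e, eb e} := by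
        ext v
        rw [Finset.mem_bipartiteBelow]
        simp [hmem_iff e v]
      rw [this]
      rw [Finset.card_insert_of_notMem (by simp [hea, heb, hab e]), Finset.card_singleton]
  -- σ is surjective onto F
  have hσsurj : ∀ e ∈ F, ∃ w, σ w = e := by
    intro e he
    have hsub : Finset.univ.image σ ⊆ F.toFinset := by
      intro x hx
      obtain ⟨v, -, rfl⟩ := Finset.mem_image.mp hx
      simpa using hσF v
    have hc : F.toFinset.card ≤ (Finset.univ.image σ).card := by
      rw [Finset.card_image_of_injective _ hσinj, Finset.card_univ]
      omega
    have := Finset.eq_of_subset_of_card_le hsub hc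
    have : e ∈ Finset.univ.image σ := by rw [this]; simpa using he
    obtain ⟨w, -, hw⟩ := Finset.mem_image.mp this
    exact ⟨w, hw⟩
  -- at most two F-edges at each vertex, and σ v is one of any two distinct ones
  have hvtwo : ∀ (v : V) (e1 e2 : E), e1 ∈ t v → e2 ∈ t v → e1 ≠ e2 → σ v = e1 ∨ σ v = e2 := by
    intro v e1 e2 h1 h2 hne
    by_contra hc
    push_neg at hc
    have hsub : ({σ v, e1, e2} : Finset E) ⊆ t v := by
      intro x hx
      simp only [Finset.mem_insert, Finset.mem_singleton] at hx
      rcases hx with rfl | rfl | rfl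
      · exact hσmem v
      · exact h1
      · exact h2
    have h3 : ({σ v, e1, e2} : Finset E).card = 3 := by
      rw [Finset.card_insert_of_notMem (by simp [hc.1, hc.2]),
        Finset.card_insert_of_notMem (by simp [hne]), Finset.card_singleton]
    have := Finset.card_le_card hsub
    rw [h3, htv v] at this
    omega
  -- exactly one matching edge per vertex
  have hmuniq : ∀ (v : V) (e1 e2 : E), e1 ∉ F → e2 ∉ F → v ∈ M.ends e1 → v ∈ M.ends e2 →
      e1 = e2 := by
    intro v e1 e2 h1 h2 hm1 hm2
    obtain ⟨a, ha⟩ := Set.ncard_eq_one.mp (hmatching v)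
    have m1 : e1 ∈ ({e : E | e ∉ F ∧ v ∈ M.ends e} : Set E) := ⟨h1, hm1⟩
    have m2 : e2 ∈ ({e : E | e ∉ F ∧ v ∈ M.ends e} : Set E) := ⟨h2, hm2⟩
    rw [ha] at m1 m2
    rw [m1, m2]
  -- distance between flags of distinct matching edges
  have hdist : ∀ p q : MGFlag M, p.1.2 ∉ F → q.1.2 ∉ F → p.1.2 ≠ q.1.2 →
      2 < (triangleReplacement M).edist p q := by
    intro p q hp hq hne
    have hvne : p.1.1 ≠ q.1.1 := fun h =>
      hne (hmuniq p.1.1 p.1.2 q.1.2 hp hq p.2 (h ▸ q.2))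
    have hne' : p ≠ q := fun h => hne (by rw [h])
    by_contra hle
    push_neg at hle
    have htop : (triangleReplacement M).edist p q ≠ ⊤ := fun h => by
      rw [h] at hle
      exact (by simp : ¬ (⊤ : ℕ∞) ≤ 2) hle
    obtain ⟨w, hw⟩ :=
      (SimpleGraph.reachable_of_edist_ne_top htop).exists_walk_length_eq_edist
    have hlen : w.length ≤ 2 := by
      rw [← hw] at hle
      exact_mod_cast hle
    -- no walk of length ≤ 2 between flags of distinct matching edges
    have hadj : ∀ r s : MGFlag M, (triangleReplacement M).Adj r s →
        (r.1.1 = s.1.1 ∨ r.1.2 = s.1.2) := fun r s h => (tr_adj.mp h).2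
    cases w with
    | nil => exact hne' rfl
    | cons h1 w' =>
      cases w' with
      | nil =>
        rcases hadj _ _ h1 with h | h
        · exact hvne h
        · exact hne h
      | cons h2 w'' =>
        cases w'' with
        | nil =>
          rename_i r
          rcases hadj _ _ h1 with ha | ha <;> rcases hadj _ _ h2 with hb | hb
          · exact hvne (ha.trans hb)
          · exact hne (hmuniq p.1.1 p.1.2 q.1.2 hp hq p.2 (by rw [ha, ← hb]; exact r.2))
          · exact hne (hmuniq q.1.1 p.1.2 q.1.2 hp hq (by rw [← hb, ha]; exact r.2) q.2)
          · exact hne (ha.trans hb)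
        | cons h3 w3 =>
          simp only [SimpleGraph.Walk.length_cons] at hlen
          omega
  -- the coloring
  set f : MGFlag M → Fin 4 := fun p =>
    if p.1.2 ∈ F then (if σ p.1.1 = p.1.2 then 0 else 1)
    else (if p.1.1 = ea p.1.2 then 2 else 3) with hfdef
  have hf0 : ∀ p : MGFlag M, f p = 0 ↔ p.1.2 ∈ F ∧ σ p.1.1 = p.1.2 := by
    intro p
    simp only [hfdef]
    by_cases h1 : p.1.2 ∈ F
    · by_cases h2 : σ p.1.1 = p.1.2 <;> simp [h1, h2]
    · by_cases h3 : p.1.1 = ea p.1.2 <;> simp [h1, h3]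
  have hf1 : ∀ p : MGFlag M, f p = 1 ↔ p.1.2 ∈ F ∧ σ p.1.1 ≠ p.1.2 := by
    intro p
    simp only [hfdef]
    by_cases h1 : p.1.2 ∈ F
    · by_cases h2 : σ p.1.1 = p.1.2 <;> simp [h1, h2]
    · by_cases h3 : p.1.1 = ea p.1.2 <;> simp [h1, h3]
  have hf2 : ∀ p : MGFlag M, f p = 2 ↔ p.1.2 ∉ F ∧ p.1.1 = ea p.1.2 := by
    intro p
    simp only [hfdef]
    by_cases h1 : p.1.2 ∈ F
    · by_cases h2 : σ p.1.1 = p.1.2 <;> simp [h1, h2]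
    · by_cases h3 : p.1.1 = ea p.1.2 <;> simp [h1, h3]
  have hf3 : ∀ p : MGFlag M, f p = 3 ↔ p.1.2 ∉ F ∧ p.1.1 ≠ ea p.1.2 := by
    intro p
    simp only [hfdef]
    by_cases h1 : p.1.2 ∈ F
    · by_cases h2 : σ p.1.1 = p.1.2 <;> simp [h1, h2]
    · by_cases h3 : p.1.1 = ea p.1.2 <;> simp [h1, h3]
  have flag_ne : ∀ p q : MGFlag M, p.1.1 = q.1.1 → p.1.2 = q.1.2 → p = q := by
    intro p q h1 h2
    exact Subtype.ext (Prod.ext h1 h2)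
  refine ⟨f, ⟨?_, ?_, ?_, ?_⟩, ?_, ?_, ?_⟩
  · -- color 0 independent
    intro u v hu hv hadjuv
    rw [tr_adj] at hadjuv
    obtain ⟨hne, hor⟩ := hadjuv
    obtain ⟨huF, huσ⟩ := (hf0 u).mp hu
    obtain ⟨hvF, hvσ⟩ := (hf0 v).mp hv
    rcases hor with h | h
    · exact hne (flag_ne u v h (by rw [← huσ, ← hvσ, h]))
    · exact hne (flag_ne u v (hσinj (by rw [huσ, hvσ, h])) h)
  · -- color 1 independent
    intro u v hu hv hadjuv
    rw [tr_adj] at hadjuv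
    obtain ⟨hne, hor⟩ := hadjuv
    obtain ⟨huF, huσ⟩ := (hf1 u).mp hu
    obtain ⟨hvF, hvσ⟩ := (hf1 v).mp hv
    rcases hor with h | h
    · -- same vertex, different F-edges
      have hedne : u.1.2 ≠ v.1.2 := fun h2 => hne (flag_ne u v h h2)
      have h1 : u.1.2 ∈ t u.1.1 := (htmem _ _).mpr ⟨huF, u.2⟩
      have h2 : v.1.2 ∈ t u.1.1 := (htmem _ _).mpr ⟨hvF, h ▸ v.2⟩
      rcases hvtwo u.1.1 u.1.2 v.1.2 h1 h2 hedne with hs | hs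
      · exact huσ hs
      · exact hvσ (by rw [← h]; exact hs)
    · -- same edge, both flags avoid σ
      obtain ⟨w, hw⟩ := hσsurj u.1.2 huF
      have hwm : w ∈ M.ends u.1.2 := hw ▸ hσends w
      have hvvne : u.1.1 ≠ v.1.1 := fun h2 => hne (flag_ne u v h2 h)
      have hwu : w ≠ u.1.1 := fun h2 => huσ (by rw [← h2, hw])
      have hwv : w ≠ v.1.1 := fun h2 => hvσ (by rw [← h2, hw, h])
      rcases (hmem_iff u.1.2 w).mp hwm with rfl | rfl <;>
        rcases (hmem_iff u.1.2 u.1.1).mp u.2 with h4 | h4 <;>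
        rcases (hmem_iff u.1.2 v.1.1).mp (h ▸ v.2) with h5 | h5 <;>
        first
          | exact absurd h4 (Ne.symm hwu)
          | exact absurd h5 (Ne.symm hwv)
          | exact hvvne (h4.trans h5.symm)
  · -- color 2 packing
    intro u v hne hu hv
    obtain ⟨huF, hue⟩ := (hf2 u).mp hu
    obtain ⟨hvF, hve⟩ := (hf2 v).mp hv
    have hedne : u.1.2 ≠ v.1.2 := by
      intro h
      exact hne (flag_ne u v (by rw [hue, hve, h]) h)
    exact hdist u v huF hvF hedne
  · -- color 3 packing
    intro u v hne hu hv
    obtain ⟨huF, hue⟩ := (hf3 u).mp hu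
    obtain ⟨hvF, hve⟩ := (hf3 v).mp hv
    have hedne : u.1.2 ≠ v.1.2 := by
      intro h
      rcases (hmem_iff u.1.2 u.1.1).mp u.2 with h4 | h4
      · exact hue h4
      · rcases (hmem_iff v.1.2 v.1.1).mp v.2 with h5 | h5
        · exact hve h5
        · exact hne (flag_ne u v (by rw [h4, h5, h]) h)
    exact hdist u v huF hvF hedne
  · -- F-flags get 0 or 1
    intro p hpF
    rw [hf0, hf1]
    by_cases h : σ p.1.1 = p.1.2
    · exact Or.inl ⟨hpF, h⟩
    · exact Or.inr ⟨hpF, h⟩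
  · -- matching flags get 2 or 3
    intro p hpF
    rw [hf2, hf3]
    by_cases h : p.1.1 = ea p.1.2
    · exact Or.inl ⟨hpF, h⟩
    · exact Or.inr ⟨hpF, h⟩
  · -- the two flags of a matching edge get distinct colors
    intro p q hne hee hpF hfeq
    have hvne : p.1.1 ≠ q.1.1 := fun h => hne (flag_ne p q h hee)
    by_cases hp : p.1.1 = ea p.1.2 <;> by_cases hq : q.1.1 = ea q.1.2
    · exact hvne (by rw [hp, hq, hee])
    · have e2 : f p = 2 := (hf2 p).mpr ⟨hpF, hp⟩
      have e3 : f q = 3 := (hf3 q).mpr ⟨hee ▸ hpF, hq⟩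
      rw [e2, e3] at hfeq
      exact absurd hfeq (by decide)
    · have e3 : f p = 3 := (hf3 p).mpr ⟨hpF, hp⟩
      have e2 : f q = 2 := (hf2 q).mpr ⟨hee ▸ hpF, hq⟩
      rw [e3, e2] at hfeq
      exact absurd hfeq (by decide)
    · rcases (hmem_iff p.1.2 p.1.1).mp p.2 with h4 | h4
      · exact hp h4
      · rcases (hmem_iff q.1.2 q.1.1).mp q.2 with h5 | h5
        · exact hq h5
        · exact hvne (by rw [h4, h5, hee])
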